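/- Let d ≥ 2 and let S be any set of vectors in ℝ^d containing strictly fewer than (d²+d)/2 vectors. Then there exist Gaussian measures P and Q on ℝ^d such that P_{⟨x⟩} = Q_{⟨x⟩} for all x ∈ S, but P ≠ Q. -/

import Mathlib

open MeasureTheory Real Matrix
open scoped ENNReal

/-- The projection of a measure on `ℝ^d` onto a vector subspace `H`. -/
noncomputable def projMeasure {d : ℕ} (H : Submodule ℝ (EuclideanSpace ℝ (Fin d)))
    (P : Measure (EuclideanSpace ℝ (Fin d))) : Measure (EuclideanSpace ℝ (Fin d)) :=
  P.map (fun x => (H.orthogonalProjectionOnto x : EuclideanSpace ℝ (Fin d)))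

/-- The measure on `ℝ^d` with Gaussian density of mean `μ` and covariance matrix `S`. -/
noncomputable def gaussMeasure {d : ℕ} (μ : EuclideanSpace ℝ (Fin d))
    (S : Matrix (Fin d) (Fin d) ℝ) : Measure (EuclideanSpace ℝ (Fin d)) :=
  volume.withDensity fun x => ENNReal.ofReal
    ((Real.sqrt ((2 * Real.pi) ^ d * S.det))⁻¹ *
      Real.exp (-(1 / 2) * ((fun i => x i - μ i) ⬝ᵥ S⁻¹.mulVec (fun i => x i - μ i))))

/-- `P` is a Gaussian measure on `ℝ^d`. -/
def IsGaussianD {d : ℕ} (P : Measure (EuclideanSpace ℝ (Fin d))) : Prop :=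
  ∃ (μ : EuclideanSpace ℝ (Fin d)) (S : Matrix (Fin d) (Fin d) ℝ),
    S.PosDef ∧ P = gaussMeasure μ S

/-! ### Auxiliary lemmas -/

noncomputable def symOf {d : ℕ} (c : Sym2 (Fin d) → ℝ) : Matrix (Fin d) (Fin d) ℝ :=
  Matrix.of fun i j => c s(i, j)

lemma symOf_isSymm {d : ℕ} (c : Sym2 (Fin d) → ℝ) : (symOf c).IsSymm := by
  ext i j; simp [symOf, Matrix.transpose_apply, Sym2.eq_swap]

lemma symOf_eq_zero {d : ℕ} {c : Sym2 (Fin d) → ℝ} (h : symOf c = 0) : c = 0 := by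
  funext p
  induction p using Sym2.ind with
  | _ i j => exact congrFun (congrFun h i) j

lemma symOf_add {d : ℕ} (c₁ c₂ : Sym2 (Fin d) → ℝ) : symOf (c₁ + c₂) = symOf c₁ + symOf c₂ := by
  ext i j; simp [symOf]

lemma symOf_smul {d : ℕ} (r : ℝ) (c : Sym2 (Fin d) → ℝ) : symOf (r • c) = r • symOf c := by
  ext i j; simp [symOf]

noncomputable def quadMap {d : ℕ} (s : Finset (EuclideanSpace ℝ (Fin d))) :
    (Sym2 (Fin d) → ℝ) →ₗ[ℝ] (s → ℝ) where
  toFun c := fun x => (fun i => (x : EuclideanSpace ℝ (Fin d)) i) ⬝ᵥ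
    (symOf c).mulVec (fun i => (x : EuclideanSpace ℝ (Fin d)) i)
  map_add' c₁ c₂ := by
    funext x
    simp [symOf_add, Matrix.add_mulVec, dotProduct_add]
  map_smul' r c := by
    funext x
    simp [symOf_smul, Matrix.smul_mulVec, dotProduct_smul]

lemma exists_sym_vanishing {d : ℕ} (S : Set (EuclideanSpace ℝ (Fin d)))
    (hcard : S.encard < ((d ^ 2 + d) / 2 : ℕ)) :
    ∃ A : Matrix (Fin d) (Fin d) ℝ, A.IsSymm ∧ A ≠ 0 ∧
      ∀ x ∈ S, (fun i => x i) ⬝ᵥ A.mulVec (fun i => x i) = 0 := by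
  have hSfin : S.Finite := Set.finite_of_encard_le_coe hcard.le
  set s := hSfin.toFinset with hs
  have hcard' : s.card < (d ^ 2 + d) / 2 := by
    have := hSfin.encard_eq_coe_toFinset_card
    rw [this] at hcard
    exact_mod_cast hcard
  have hdim : Fintype.card (Sym2 (Fin d)) = (d ^ 2 + d) / 2 := by
    rw [Sym2.card, Fintype.card_fin, Nat.choose_two_right]
    have h1 : (d + 1) * (d + 1 - 1) = d ^ 2 + d := by simp; ring
    rw [h1]
  have hker : ∃ c : Sym2 (Fin d) → ℝ, c ≠ 0 ∧ quadMap s c = 0 := by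
    by_contra h
    push_neg at h
    have hinj : Function.Injective (quadMap s) := by
      rw [← LinearMap.ker_eq_bot]
      rw [Submodule.eq_bot_iff]
      intro c hc
      by_contra hc0
      exact h c hc0 (LinearMap.mem_ker.mp hc)
    have h1 := LinearMap.finrank_le_finrank_of_injective hinj
    rw [Module.finrank_pi, Module.finrank_pi, hdim, Fintype.card_coe] at h1
    omega
  obtain ⟨c, hcne, hc0⟩ := hker
  refine ⟨symOf c, symOf_isSymm c, fun h => hcne (symOf_eq_zero h), fun x hx => ?_⟩
  have hxs : x ∈ s := hSfin.mem_toFinset.mpr hx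
  exact congrFun hc0 ⟨x, hxs⟩

lemma quad_abs_le {d : ℕ} (A : Matrix (Fin d) (Fin d) ℝ) (x : Fin d → ℝ) :
    |x ⬝ᵥ A.mulVec x| ≤ (∑ i, ∑ j, |A i j|) * (x ⬝ᵥ x) := by
  have hterm : ∀ i j : Fin d, |x i * (A i j * x j)| ≤ |A i j| * (x ⬝ᵥ x) := by
    intro i j
    have hii : x i * x i ≤ x ⬝ᵥ x := Finset.single_le_sum (f := fun k => x k * x k)
        (fun k _ => mul_self_nonneg (x k)) (Finset.mem_univ i)
    have hjj : x j * x j ≤ x ⬝ᵥ x := Finset.single_le_sum (f := fun k => x k * x k)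
        (fun k _ => mul_self_nonneg (x k)) (Finset.mem_univ j)
    have hxij : |x i * x j| ≤ x ⬝ᵥ x := by
      rw [abs_mul]
      nlinarith [abs_nonneg (x i), abs_nonneg (x j), sq_abs (x i), sq_abs (x j),
        sq_nonneg (|x i| - |x j|), sq_nonneg (x i), sq_nonneg (x j)]
    calc |x i * (A i j * x j)| = |A i j| * |x i * x j| := by rw [abs_mul, abs_mul, abs_mul]; ring
    _ ≤ |A i j| * (x ⬝ᵥ x) := mul_le_mul_of_nonneg_left hxij (abs_nonneg _)
  calc |x ⬝ᵥ A.mulVec x| ≤ ∑ i, |∑ j, x i * (A i j * x j)| := by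
        simpa [dotProduct, Matrix.mulVec, Finset.mul_sum] using
          Finset.abs_sum_le_sum_abs (fun i => ∑ j, x i * (A i j * x j)) Finset.univ
    _ ≤ ∑ i, ∑ j, |x i * (A i j * x j)| :=
        Finset.sum_le_sum fun i _ => Finset.abs_sum_le_sum_abs _ _
    _ ≤ ∑ i, ∑ j, |A i j| * (x ⬝ᵥ x) :=
        Finset.sum_le_sum fun i _ => Finset.sum_le_sum fun j _ => hterm i j
    _ = (∑ i, ∑ j, |A i j|) * (x ⬝ᵥ x) := by
        rw [Finset.sum_mul]; congr 1; funext i; rw [Finset.sum_mul]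

lemma posdef_one_add {d : ℕ} (A : Matrix (Fin d) (Fin d) ℝ) (hA : A.IsSymm)
    {ε : ℝ} (hε : 0 < ε) (hε2 : ε * (∑ i, ∑ j, |A i j|) < 1) :
    (1 + ε • A).PosDef := by
  refine Matrix.PosDef.of_dotProduct_mulVec_pos ?_ ?_
  · unfold Matrix.IsHermitian
    rw [conjTranspose_eq_transpose_of_trivial, Matrix.transpose_add, Matrix.transpose_one,
      Matrix.transpose_smul, hA.eq]
  · intro x hx
    have hxx : 0 < x ⬝ᵥ x := by
      simpa using (dotProduct_self_star_pos_iff (v := x)).mpr hx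
    have hq := quad_abs_le A x
    have hC : 0 ≤ (∑ i, ∑ j, |A i j|) := by positivity
    have key : x ⬝ᵥ (1 + ε • A).mulVec x = x ⬝ᵥ x + ε * (x ⬝ᵥ A.mulVec x) := by
      rw [Matrix.add_mulVec, dotProduct_add, Matrix.smul_mulVec, dotProduct_smul,
        Matrix.one_mulVec]
      simp [smul_eq_mul]
    simp only [star_trivial]
    rw [key]
    nlinarith [abs_le.mp hq, mul_le_mul_of_nonneg_left (abs_le.mp hq).1 hε.le]

lemma quad_continuous {d : ℕ} (B : Matrix (Fin d) (Fin d) ℝ) (μ : EuclideanSpace ℝ (Fin d)) :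
    Continuous fun x : EuclideanSpace ℝ (Fin d) =>
      ((fun i => x i - μ i) ⬝ᵥ B.mulVec fun i => x i - μ i) := by
  simp only [dotProduct, Matrix.mulVec]
  apply continuous_finset_sum
  intro i _
  apply Continuous.mul
  · exact ((continuous_apply i).comp (PiLp.continuous_ofLp 2 _)).sub continuous_const
  · exact continuous_finset_sum _ fun j _ =>
      continuous_const.mul (((continuous_apply j).comp (PiLp.continuous_ofLp 2 _)).sub continuous_const)

lemma gaussDensity_continuous {d : ℕ} (Sm : Matrix (Fin d) (Fin d) ℝ)
    (μ : EuclideanSpace ℝ (Fin d)) :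
    Continuous fun x : EuclideanSpace ℝ (Fin d) =>
      ((Real.sqrt ((2 * Real.pi) ^ d * Sm.det))⁻¹ *
        Real.exp (-(1 / 2) * ((fun i => x i - μ i) ⬝ᵥ Sm⁻¹.mulVec (fun i => x i - μ i)))) :=
  continuous_const.mul ((continuous_const.mul (quad_continuous Sm⁻¹ μ)).rexp)

lemma withDensity_map_equiv {α β : Type*} [MeasurableSpace α] [MeasurableSpace β]
    (μ : Measure α) (e : α ≃ᵐ β) {f : α → ℝ≥0∞} (hf : Measurable f) :
    (μ.withDensity f).map e = (μ.map e).withDensity (f ∘ e.symm) := by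
  ext s hs
  rw [Measure.map_apply e.measurable hs, withDensity_apply _ (e.measurable hs),
    withDensity_apply _ hs,
    setLIntegral_map hs (hf.comp e.symm.measurable) e.measurable]
  congr 1
  funext x
  simp

section
open scoped MatrixOrder

lemma exists_sqrt_of_posDef {d : ℕ} (S : Matrix (Fin d) (Fin d) ℝ) (hS : S.PosDef) :
    ∃ M : Matrix (Fin d) (Fin d) ℝ, M * M = S ∧ Mᵀ = M := by
  refine ⟨CFC.sqrt S, CFC.sqrt_mul_sqrt_self S hS.posSemidef.nonneg, ?_⟩
  rw [← Matrix.conjTranspose_eq_transpose_of_trivial]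
  exact (CFC.sqrt_nonneg S).posSemidef.1

end

noncomputable def mulVecEquiv {d : ℕ} (M : Matrix (Fin d) (Fin d) ℝ) (hM : M.det ≠ 0) :
    EuclideanSpace ℝ (Fin d) ≃ₗ[ℝ] EuclideanSpace ℝ (Fin d) where
  toFun x := WithLp.toLp 2 (M.mulVec x)
  invFun y := WithLp.toLp 2 (M⁻¹.mulVec y)
  left_inv x := by
    show WithLp.toLp 2 (M⁻¹.mulVec (M.mulVec x)) = x
    rw [Matrix.mulVec_mulVec, Matrix.nonsing_inv_mul M (by simpa using hM), Matrix.one_mulVec]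
  right_inv y := by
    show WithLp.toLp 2 (M.mulVec (M⁻¹.mulVec y)) = y
    rw [Matrix.mulVec_mulVec, Matrix.mul_nonsing_inv M (by simpa using hM), Matrix.one_mulVec]
  map_add' x y := congrArg (WithLp.toLp 2) (Matrix.mulVec_add M x y)
  map_smul' r x := congrArg (WithLp.toLp 2) (Matrix.mulVec_smul M r x)

lemma mulVecEquiv_det {d : ℕ} (M : Matrix (Fin d) (Fin d) ℝ) (hM : M.det ≠ 0) :
    LinearMap.det ((mulVecEquiv M hM : EuclideanSpace ℝ (Fin d) ≃ₗ[ℝ] EuclideanSpace ℝ (Fin d)) :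
      EuclideanSpace ℝ (Fin d) →ₗ[ℝ] EuclideanSpace ℝ (Fin d)) = M.det := by
  rw [← LinearMap.det_toMatrix (EuclideanSpace.basisFun (Fin d) ℝ).toBasis]
  congr 1
  ext i j
  rw [LinearMap.toMatrix_apply]
  simp only [mulVecEquiv, OrthonormalBasis.coe_toBasis, EuclideanSpace.basisFun_apply,
    LinearEquiv.coe_coe, LinearEquiv.coe_mk, Equiv.coe_fn_mk,
    OrthonormalBasis.coe_toBasis_repr_apply, EuclideanSpace.basisFun_repr]
  show (M.mulVec (EuclideanSpace.single j 1)) i = M i j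
  rw [show (EuclideanSpace.single j (1:ℝ)).ofLp = Pi.single j 1 by
    ext k; simp [EuclideanSpace.single_apply, Pi.single_apply]]
  simp [Matrix.mulVec_single]

lemma density_eq {d : ℕ} (Sm M : Matrix (Fin d) (Fin d) ℝ) (hS : Sm.PosDef) (y : Fin d → ℝ) :
    |M.det|⁻¹ * ((Real.sqrt ((2 * Real.pi) ^ d * Sm.det))⁻¹ *
       Real.exp (-(1/2) * ((M⁻¹.mulVec y) ⬝ᵥ Sm⁻¹.mulVec (M⁻¹.mulVec y))))
    = (Real.sqrt ((2 * Real.pi) ^ d * (M * Sm * Mᵀ).det))⁻¹ *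
       Real.exp (-(1/2) * (y ⬝ᵥ (M * Sm * Mᵀ)⁻¹.mulVec y)) := by
  have hq : (M⁻¹.mulVec y) ⬝ᵥ Sm⁻¹.mulVec (M⁻¹.mulVec y)
      = y ⬝ᵥ (M * Sm * Mᵀ)⁻¹.mulVec y := by
    conv_rhs => rw [Matrix.mul_inv_rev, Matrix.mul_inv_rev, ← Matrix.transpose_nonsing_inv,
      ← Matrix.mulVec_mulVec, Matrix.dotProduct_mulVec, Matrix.vecMul_transpose]
    rw [Matrix.mulVec_mulVec]
  have hc : Real.sqrt ((2 * Real.pi) ^ d * (M * Sm * Mᵀ).det)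
      = Real.sqrt ((2 * Real.pi) ^ d * Sm.det) * |M.det| := by
    have hdet : (M * Sm * Mᵀ).det = Sm.det * M.det ^ 2 := by
      rw [Matrix.det_mul, Matrix.det_mul, Matrix.det_transpose]; ring
    have h1 : (2 * Real.pi) ^ d * (Sm.det * M.det ^ 2)
        = ((2 * Real.pi) ^ d * Sm.det) * M.det ^ 2 := by ring
    have h2 : (0:ℝ) ≤ (2 * Real.pi) ^ d * Sm.det :=
      mul_nonneg (pow_nonneg (by positivity) d) hS.det_pos.le
    rw [hdet, h1, Real.sqrt_mul h2, Real.sqrt_sq_eq_abs]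
  rw [hq, hc, mul_inv]
  ring

lemma gauss_map {d : ℕ} (Sm M : Matrix (Fin d) (Fin d) ℝ) (hS : Sm.PosDef) (hM : M.det ≠ 0) :
    (gaussMeasure (0 : EuclideanSpace ℝ (Fin d)) Sm).map
      (fun y : EuclideanSpace ℝ (Fin d) => (WithLp.toLp 2 (M.mulVec y) : EuclideanSpace ℝ (Fin d))) =
    gaussMeasure 0 (M * Sm * Mᵀ) := by
  set L := mulVecEquiv M hM with hL
  set e : EuclideanSpace ℝ (Fin d) ≃ᵐ EuclideanSpace ℝ (Fin d) :=
    L.toContinuousLinearEquiv.toHomeomorph.toMeasurableEquiv with he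
  have hfun : (fun y : EuclideanSpace ℝ (Fin d) =>
      (WithLp.toLp 2 (M.mulVec y) : EuclideanSpace ℝ (Fin d))) = ⇑e := rfl
  have hmeas : Measurable fun x : EuclideanSpace ℝ (Fin d) => ENNReal.ofReal
      ((Real.sqrt ((2 * Real.pi) ^ d * Sm.det))⁻¹ *
        Real.exp (-(1 / 2) * ((fun i => x i - (0 : EuclideanSpace ℝ (Fin d)) i) ⬝ᵥ
          Sm⁻¹.mulVec (fun i => x i - (0 : EuclideanSpace ℝ (Fin d)) i)))) :=
    ENNReal.measurable_ofReal.comp (gaussDensity_continuous Sm 0).measurable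
  have hmap : volume.map e = ENNReal.ofReal |M.det|⁻¹ • volume := by
    have h := Measure.map_linearMap_addHaar_eq_smul_addHaar (μ := volume)
      (f := (L : EuclideanSpace ℝ (Fin d) →ₗ[ℝ] EuclideanSpace ℝ (Fin d)))
      (by rw [mulVecEquiv_det]; exact hM)
    rw [mulVecEquiv_det, abs_inv] at h
    exact h
  rw [gaussMeasure, hfun, withDensity_map_equiv _ e hmeas, hmap, withDensity_smul_measure]
  rw [gaussMeasure]
  rw [← withDensity_smul _ (by
    exact (ENNReal.measurable_ofReal.comp (gaussDensity_continuous Sm 0).measurable).comp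
      e.symm.measurable)]
  congr 1
  funext y
  have hsymm : e.symm y = (WithLp.toLp 2 (M⁻¹.mulVec y) : EuclideanSpace ℝ (Fin d)) := rfl
  simp only [Pi.smul_apply, Function.comp_apply, hsymm, smul_eq_mul]
  have h0 : ∀ z : EuclideanSpace ℝ (Fin d), (fun i => z i - (0 : EuclideanSpace ℝ (Fin d)) i)
      = fun i => z i := by intro z; funext i; show z i - 0 = z i; exact sub_zero _
  have h0' : ∀ v : Fin d → ℝ, (fun i => v i - (0 : EuclideanSpace ℝ (Fin d)) i) = v := by
    intro v; funext i; show v i - 0 = v i; exact sub_zero _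
  rw [h0, h0']
  rw [← ENNReal.ofReal_mul (by positivity)]
  rw [density_eq Sm M hS y.ofLp]

lemma exists_reflection {d : ℕ} (a b : Fin d → ℝ) (ha : a ⬝ᵥ a = 1) (hb : b ⬝ᵥ b = 1) :
    ∃ V : Matrix (Fin d) (Fin d) ℝ, V * Vᵀ = 1 ∧ Vᵀ = V ∧ V.mulVec a = b := by
  by_cases hab : a = b
  · exact ⟨1, by simp, by simp, by simp [hab, Matrix.one_mulVec]⟩
  set w : Fin d → ℝ := a - b with hw
  have hwne : w ≠ 0 := sub_ne_zero_of_ne hab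
  set s : ℝ := w ⬝ᵥ w with hsdef
  have hs : 0 < s := by simpa using (dotProduct_self_star_pos_iff (v := w)).mpr hwne
  set V : Matrix (Fin d) (Fin d) ℝ := 1 - (2 / s) • vecMulVec w w with hV
  have hWW : vecMulVec w w * vecMulVec w w = s • vecMulVec w w := by
    ext i j
    simp only [Matrix.mul_apply, vecMulVec_apply, Matrix.smul_apply, smul_eq_mul, hsdef,
      dotProduct]
    rw [Finset.sum_mul]
    congr 1
    funext k
    ring
  have hVsymm : Vᵀ = V := by
    rw [hV, Matrix.transpose_sub, Matrix.transpose_one, Matrix.transpose_smul]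
    congr 2
    ext i j
    simp [vecMulVec_apply, mul_comm]
  have hVV : V * Vᵀ = 1 := by
    rw [hVsymm, hV]
    have expand : (1 - (2 / s) • vecMulVec w w) * (1 - (2 / s) • vecMulVec w w)
        = 1 - (2 * (2 / s)) • vecMulVec w w
          + ((2 / s) * (2 / s)) • (vecMulVec w w * vecMulVec w w) := by
      simp only [Matrix.sub_mul, Matrix.mul_sub, Matrix.smul_mul, Matrix.mul_smul,
        Matrix.mul_one, Matrix.one_mul, smul_smul]
      module
    rw [expand, hWW, smul_smul]
    have : 2 / s * (2 / s) * s = 2 * (2 / s) := by field_simp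
    rw [this]
    abel
  refine ⟨V, hVV, hVsymm, ?_⟩
  have hWa : (vecMulVec w w).mulVec a = (w ⬝ᵥ a) • w := by
    ext i
    simp only [Matrix.mulVec, vecMulVec_apply, Pi.smul_apply, smul_eq_mul, dotProduct]
    rw [Finset.sum_mul]
    congr 1
    funext k
    ring
  have hba : b ⬝ᵥ a = a ⬝ᵥ b := dotProduct_comm b a
  have hwa : w ⬝ᵥ a = 1 - a ⬝ᵥ b := by
    rw [hw, sub_dotProduct, ha, hba]
  have hsval : s = 2 - 2 * (a ⬝ᵥ b) := by
    rw [hsdef, hw, sub_dotProduct, dotProduct_sub, dotProduct_sub, ha, hb, hba]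
    ring
  have hcoef : (2 / s) * (w ⬝ᵥ a) = 1 := by
    rw [hwa, hsval]
    have : (2:ℝ) - 2 * (a ⬝ᵥ b) ≠ 0 := by rw [← hsval]; exact hs.ne'
    rw [div_mul_eq_mul_div, div_eq_one_iff_eq this]
    ring
  rw [hV, Matrix.sub_mulVec, Matrix.one_mulVec, Matrix.smul_mulVec, hWa, smul_smul, hcoef]
  simp [hw]

lemma withDensity_ne_of_lt {d : ℕ} (f g : EuclideanSpace ℝ (Fin d) → ℝ) (B : ℝ)
    (hf : Continuous f) (hg : Continuous g) (hf0 : ∀ y, 0 ≤ f y) (hfB : ∀ y, f y ≤ B)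
    (y₀ : EuclideanSpace ℝ (Fin d)) (hlt : f y₀ < g y₀) :
    volume.withDensity (fun y => ENNReal.ofReal (f y)) ≠
    volume.withDensity (fun y => ENNReal.ofReal (g y)) := by
  set δ : ℝ := (g y₀ - f y₀) / 2 with hδdef
  have hδ : 0 < δ := by simp [hδdef]; linarith
  set U : Set (EuclideanSpace ℝ (Fin d)) :=
    {y | δ < g y - f y} ∩ Metric.ball y₀ 1 with hU
  have hUopen : IsOpen U := ((isOpen_lt continuous_const (hg.sub hf))).inter Metric.isOpen_ball
  have hy₀ : y₀ ∈ U := by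
    constructor
    · show δ < g y₀ - f y₀; rw [hδdef]; linarith
    · exact Metric.mem_ball_self one_pos
  have hUmeas : MeasurableSet U := hUopen.measurableSet
  have hUpos : 0 < volume U := hUopen.measure_pos volume ⟨y₀, hy₀⟩
  have hUfin : volume U < ⊤ :=
    lt_of_le_of_lt (measure_mono Set.inter_subset_right) measure_ball_lt_top
  intro hPQ
  have h1 : (volume.withDensity (fun y => ENNReal.ofReal (f y))) U =
      ∫⁻ y in U, ENNReal.ofReal (f y) := withDensity_apply _ hUmeas
  have h2 : (volume.withDensity (fun y => ENNReal.ofReal (g y))) U =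
      ∫⁻ y in U, ENNReal.ofReal (g y) := withDensity_apply _ hUmeas
  have hfin : ∫⁻ y in U, ENNReal.ofReal (f y) < ⊤ := by
    calc ∫⁻ y in U, ENNReal.ofReal (f y) ≤ ∫⁻ _ in U, ENNReal.ofReal B :=
          setLIntegral_mono measurable_const fun y _ => ENNReal.ofReal_le_ofReal (hfB y)
      _ = ENNReal.ofReal B * volume U := by rw [setLIntegral_const]
      _ < ⊤ := ENNReal.mul_lt_top ENNReal.ofReal_lt_top hUfin
  have hlow : ∫⁻ y in U, ENNReal.ofReal (f y) + ENNReal.ofReal δ ≤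
      ∫⁻ y in U, ENNReal.ofReal (g y) := by
    apply setLIntegral_mono (hg.measurable.ennreal_ofReal)
    intro y hy
    rw [← ENNReal.ofReal_add (hf0 y) hδ.le]
    apply ENNReal.ofReal_le_ofReal
    have : δ < g y - f y := hy.1
    linarith
  have hsum : ∫⁻ y in U, (ENNReal.ofReal (f y) + ENNReal.ofReal δ) =
      (∫⁻ y in U, ENNReal.ofReal (f y)) + ENNReal.ofReal δ * volume U := by
    rw [lintegral_add_right _ measurable_const, setLIntegral_const]
  have hstrict : ∫⁻ y in U, ENNReal.ofReal (f y) < ∫⁻ y in U, ENNReal.ofReal (g y) := by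
    refine lt_of_lt_of_le ?_ (hsum ▸ hlow)
    apply ENNReal.lt_add_right hfin.ne
    exact mul_ne_zero (by simpa using hδ) hUpos.ne'
  rw [← h1, ← h2, hPQ] at hstrict
  exact lt_irrefl _ hstrict

lemma sym_eq_zero_of_quad {d : ℕ} (D : Matrix (Fin d) (Fin d) ℝ) (hD : Dᵀ = D)
    (h : ∀ y : Fin d → ℝ, y ⬝ᵥ D.mulVec y = 0) : D = 0 := by
  have e2 : ∀ i j : Fin d, (Pi.single i 1 : Fin d → ℝ) ⬝ᵥ D.mulVec (Pi.single j 1) = D i j := by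
    intro i j
    rw [Matrix.mulVec_single]
    simp [dotProduct, Pi.single_apply]
  ext i j
  have h1 := h (Pi.single i 1)
  have h2 := h (Pi.single j 1)
  have h3 := h (Pi.single i 1 + Pi.single j 1)
  rw [Matrix.mulVec_add, dotProduct_add, add_dotProduct, add_dotProduct] at h3
  rw [e2, e2, e2, e2] at h3
  rw [e2] at h1
  rw [e2] at h2
  have hsym : D j i = D i j := by
    conv_lhs => rw [← hD]
    rfl
  simp only [Matrix.zero_apply]
  linarith

/-- If `S ⊆ ℝ^d` has strictly fewer than `(d² + d)/2` elements, then there are two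
distinct Gaussian measures on `ℝ^d` whose projections onto the line spanned by `x`
coincide for every `x ∈ S`. -/
theorem gaussian_not_determined_by_few_lines {d : ℕ} (hd : 2 ≤ d)
    (S : Set (EuclideanSpace ℝ (Fin d)))
    (hcard : S.encard < ((d ^ 2 + d) / 2 : ℕ)) :
    ∃ P Q : Measure (EuclideanSpace ℝ (Fin d)), IsGaussianD P ∧ IsGaussianD Q ∧
      (∀ x ∈ S, projMeasure (Submodule.span ℝ {x}) P =
        projMeasure (Submodule.span ℝ {x}) Q) ∧ P ≠ Q := by
  classical
  obtain ⟨A, hAs, hA0, hAq⟩ := exists_sym_vanishing S hcard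
  set C : ℝ := ∑ i, ∑ j, |A i j| with hC
  have hC0 : 0 ≤ C := Finset.sum_nonneg fun i _ => Finset.sum_nonneg fun j _ => abs_nonneg _
  set ε : ℝ := 1 / (2 * (C + 1)) with hεdef
  have hε : 0 < ε := by
    rw [hεdef]
    exact div_pos one_pos (by linarith)
  have hε2 : ε * C < 1 := by
    rw [hεdef, div_mul_eq_mul_div, one_mul, div_lt_one (by linarith)]
    linarith
  set S2 : Matrix (Fin d) (Fin d) ℝ := 1 + ε • A with hS2
  have hpos₂ : S2.PosDef := posdef_one_add A hAs hε (by rw [← hC]; exact hε2)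
  have hpos₁ : (1 : Matrix (Fin d) (Fin d) ℝ).PosDef := Matrix.PosDef.one
  have hS2sym : S2ᵀ = S2 := by
    rw [← Matrix.conjTranspose_eq_transpose_of_trivial]
    exact hpos₂.1
  obtain ⟨M, hMM, hMsym⟩ := exists_sqrt_of_posDef S2 hpos₂
  have hMdet : M.det ≠ 0 := by
    intro h
    have : S2.det = 0 := by rw [← hMM, Matrix.det_mul, h, mul_zero]
    exact hpos₂.det_pos.ne' this
  set P : Measure (EuclideanSpace ℝ (Fin d)) := gaussMeasure 0 1 with hP
  set Q : Measure (EuclideanSpace ℝ (Fin d)) := gaussMeasure 0 S2 with hQdef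
  set T : EuclideanSpace ℝ (Fin d) → EuclideanSpace ℝ (Fin d) :=
    fun y => (WithLp.toLp 2 (M.mulVec y) : EuclideanSpace ℝ (Fin d)) with hT
  have hTmeas : Measurable T :=
    (LinearMap.continuous_of_finiteDimensional
      ((mulVecEquiv M hMdet : EuclideanSpace ℝ (Fin d) ≃ₗ[ℝ] EuclideanSpace ℝ (Fin d)) :
        EuclideanSpace ℝ (Fin d) →ₗ[ℝ] EuclideanSpace ℝ (Fin d))).measurable
  have hQP : Q = P.map T := by
    rw [hQdef, hP, hT, gauss_map 1 M hpos₁ hMdet, mul_one, hMsym, hMM]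
  have hPQuniv : P Set.univ = Q Set.univ := by
    rw [hQP, Measure.map_apply hTmeas MeasurableSet.univ, Set.preimage_univ]
  refine ⟨P, Q, ⟨0, 1, hpos₁, rfl⟩, ⟨0, S2, hpos₂, rfl⟩, ?_, ?_⟩
  · -- projections agree
    intro x hx
    by_cases hx0 : x = 0
    · subst hx0
      rw [Submodule.span_zero_singleton]
      have hproj : (fun y : EuclideanSpace ℝ (Fin d) =>
          ((⊥ : Submodule ℝ (EuclideanSpace ℝ (Fin d))).orthogonalProjectionOnto y :
            EuclideanSpace ℝ (Fin d)))
          = fun _ => (0 : EuclideanSpace ℝ (Fin d)) := by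
        funext y
        rw [Submodule.orthogonalProjectionOnto_bot]
        simp
      rw [projMeasure, projMeasure, hproj, Measure.map_const, Measure.map_const, hPQuniv]
    · -- nonzero x
      set xv : Fin d → ℝ := fun i => x i with hxv
      have hxvne : xv ≠ 0 := by
        intro h
        apply hx0
        ext i
        exact congrFun h i
      have hxx : 0 < xv ⬝ᵥ xv := by
        simpa using (dotProduct_self_star_pos_iff (v := xv)).mpr hxvne
      set n : ℝ := Real.sqrt (xv ⬝ᵥ xv) with hn
      have hnpos : 0 < n := Real.sqrt_pos.mpr hxx
      have hnn : n * n = xv ⬝ᵥ xv := Real.mul_self_sqrt hxx.le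
      obtain ⟨u, hu⟩ : ∃ u : Fin d → ℝ, u = n⁻¹ • xv := ⟨_, rfl⟩
      have huu : u ⬝ᵥ u = 1 := by
        rw [hu, smul_dotProduct, dotProduct_smul, smul_eq_mul, smul_eq_mul, ← hnn]
        field_simp
      obtain ⟨b, hb⟩ : ∃ b : Fin d → ℝ, b = M.mulVec u := ⟨_, rfl⟩
      have hq0 : u ⬝ᵥ A.mulVec u = 0 := by
        rw [hu, smul_dotProduct, Matrix.mulVec_smul, dotProduct_smul]
        rw [hAq x hx]
        simp
      have hbb : b ⬝ᵥ b = 1 := by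
        have h1 : b ⬝ᵥ b = u ⬝ᵥ S2.mulVec u := by
          rw [hb, Matrix.dotProduct_mulVec, Matrix.vecMul_mulVec, hMsym, hMM,
            ← Matrix.dotProduct_mulVec]
        rw [h1, hS2, Matrix.add_mulVec, dotProduct_add, Matrix.one_mulVec, huu,
          Matrix.smul_mulVec, dotProduct_smul, hq0]
        simp
      obtain ⟨V, hVV, hVsym, hVu⟩ := exists_reflection u b huu hbb
      have hVdet : V.det ≠ 0 := by
        intro h
        have := congrArg Matrix.det hVV
        rw [Matrix.det_mul, Matrix.det_transpose, h, mul_zero, Matrix.det_one] at this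
        exact zero_ne_one this
      set TV : EuclideanSpace ℝ (Fin d) → EuclideanSpace ℝ (Fin d) :=
        fun y => (WithLp.toLp 2 (V.mulVec y) : EuclideanSpace ℝ (Fin d)) with hTV
      have hTVmeas : Measurable TV :=
        (LinearMap.continuous_of_finiteDimensional
          ((mulVecEquiv V hVdet : EuclideanSpace ℝ (Fin d) ≃ₗ[ℝ] EuclideanSpace ℝ (Fin d)) :
            EuclideanSpace ℝ (Fin d) →ₗ[ℝ] EuclideanSpace ℝ (Fin d))).measurable
      have hPV : P.map TV = P := by
        rw [hP, hTV, gauss_map 1 V hpos₁ hVdet, mul_one, hVV]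
      have hVx : V.mulVec xv = M.mulVec xv := by
        have hxvu : xv = n • u := by
          rw [hu, smul_smul, mul_inv_cancel₀ hnpos.ne', one_smul]
        rw [hxvu, Matrix.mulVec_smul, Matrix.mulVec_smul, hVu, hb]
      set prj : EuclideanSpace ℝ (Fin d) → EuclideanSpace ℝ (Fin d) :=
        fun y => ((Submodule.span ℝ {x}).orthogonalProjectionOnto y :
          EuclideanSpace ℝ (Fin d)) with hprj
      have hprjmeas : Measurable prj := by
        have hc : Continuous prj := by
          rw [hprj]
          exact continuous_subtype_val.comp
            (Submodule.span ℝ {x}).orthogonalProjectionOnto.continuous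
        exact hc.measurable
      have hinner : ∀ v w : EuclideanSpace ℝ (Fin d),
          (inner ℝ v w : ℝ) = (fun i => v i) ⬝ᵥ (fun i => w i) := by
        intro v w
        simp [PiLp.inner_apply, dotProduct, mul_comm]
      have hcomp : prj ∘ T = prj ∘ TV := by
        funext y
        show prj (T y) = prj (TV y)
        rw [hprj]
        simp only
        rw [← Submodule.starProjection_apply, ← Submodule.starProjection_apply,
          Submodule.starProjection_singleton, Submodule.starProjection_singleton]
        congr 2
        rw [hinner, hinner]
        show xv ⬝ᵥ (M.mulVec y) = xv ⬝ᵥ (V.mulVec y)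
        rw [Matrix.dotProduct_mulVec, Matrix.dotProduct_mulVec,
          ← Matrix.mulVec_transpose, ← Matrix.mulVec_transpose, hMsym, hVsym, hVx]
      show P.map prj = Q.map prj
      rw [hQP, Measure.map_map hprjmeas hTmeas, hcomp,
        ← Measure.map_map hprjmeas hTVmeas, hPV]
  · -- P ≠ Q
    have hS2det : S2.det ≠ 0 := hpos₂.det_pos.ne'
    have hS2ne1 : S2 ≠ 1 := by
      intro h
      apply hA0
      have h1 : (1 : Matrix (Fin d) (Fin d) ℝ) + ε • A = 1 := by rw [← hS2, h]
      have h2 : ε • A = 0 := by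
        have := congrArg (fun B => B - 1) h1
        simpa [add_sub_cancel_left] using this
      rcases smul_eq_zero.mp h2 with h3 | h3
      · exact absurd h3 hε.ne'
      · exact h3
    obtain ⟨F1, hF1⟩ : ∃ F : EuclideanSpace ℝ (Fin d) → ℝ, F = fun y =>
        ((Real.sqrt ((2 * Real.pi) ^ d * (1 : Matrix (Fin d) (Fin d) ℝ).det))⁻¹ *
          Real.exp (-(1 / 2) * ((fun i => y i - (0 : EuclideanSpace ℝ (Fin d)) i) ⬝ᵥ
            (1 : Matrix (Fin d) (Fin d) ℝ)⁻¹.mulVec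
              (fun i => y i - (0 : EuclideanSpace ℝ (Fin d)) i)))) := ⟨_, rfl⟩
    obtain ⟨F2, hF2⟩ : ∃ F : EuclideanSpace ℝ (Fin d) → ℝ, F = fun y =>
        ((Real.sqrt ((2 * Real.pi) ^ d * S2.det))⁻¹ *
          Real.exp (-(1 / 2) * ((fun i => y i - (0 : EuclideanSpace ℝ (Fin d)) i) ⬝ᵥ
            S2⁻¹.mulVec (fun i => y i - (0 : EuclideanSpace ℝ (Fin d)) i)))) := ⟨_, rfl⟩
    have hPdef : P = volume.withDensity (fun y => ENNReal.ofReal (F1 y)) := by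
      rw [hP, hF1]; rfl
    have hQdef2 : Q = volume.withDensity (fun y => ENNReal.ofReal (F2 y)) := by
      rw [hQdef, hF2]; rfl
    have hcont1 : Continuous F1 := by rw [hF1]; exact gaussDensity_continuous 1 0
    have hcont2 : Continuous F2 := by rw [hF2]; exact gaussDensity_continuous S2 0
    have h0 : ∀ z : EuclideanSpace ℝ (Fin d),
        (fun i => z i - (0 : EuclideanSpace ℝ (Fin d)) i) = fun i => z i := by
      intro z; funext i; show z i - 0 = z i; exact sub_zero _
    set c1 : ℝ := (Real.sqrt ((2 * Real.pi) ^ d * (1 : Matrix (Fin d) (Fin d) ℝ).det))⁻¹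
      with hc1
    set c2 : ℝ := (Real.sqrt ((2 * Real.pi) ^ d * S2.det))⁻¹ with hc2
    have hc1pos : 0 < c1 := by
      rw [hc1, Matrix.det_one, mul_one]
      have : (0:ℝ) < (2 * Real.pi) ^ d := by positivity
      positivity
    have hc2pos : 0 < c2 := by
      rw [hc2]
      have h1 : (0:ℝ) < (2 * Real.pi) ^ d * S2.det :=
        mul_pos (by positivity) hpos₂.det_pos
      positivity
    have hq1nonneg : ∀ y : EuclideanSpace ℝ (Fin d),
        0 ≤ (fun i => y i - (0 : EuclideanSpace ℝ (Fin d)) i) ⬝ᵥ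
          (1 : Matrix (Fin d) (Fin d) ℝ)⁻¹.mulVec
            (fun i => y i - (0 : EuclideanSpace ℝ (Fin d)) i) := by
      intro y
      rw [h0 y, inv_one, Matrix.one_mulVec]
      simpa using dotProduct_self_star_nonneg (fun i => y i)
    have hq2nonneg : ∀ y : EuclideanSpace ℝ (Fin d),
        0 ≤ (fun i => y i - (0 : EuclideanSpace ℝ (Fin d)) i) ⬝ᵥ
          S2⁻¹.mulVec (fun i => y i - (0 : EuclideanSpace ℝ (Fin d)) i) := by
      intro y
      rw [h0 y]
      by_cases hy : (fun i => y i) = (0 : Fin d → ℝ)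
      · rw [hy, zero_dotProduct]
      · have := hpos₂.inv.dotProduct_mulVec_pos hy
        simpa using this.le
    have h1nonneg : ∀ y, 0 ≤ F1 y := by
      intro y; rw [hF1]
      exact mul_nonneg hc1pos.le (Real.exp_nonneg _)
    have h2nonneg : ∀ y, 0 ≤ F2 y := by
      intro y; rw [hF2]
      exact mul_nonneg hc2pos.le (Real.exp_nonneg _)
    have h1le : ∀ y, F1 y ≤ c1 := by
      intro y; rw [hF1]
      have hexp : Real.exp (-(1 / 2) * ((fun i => y i - (0 : EuclideanSpace ℝ (Fin d)) i) ⬝ᵥ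
          (1 : Matrix (Fin d) (Fin d) ℝ)⁻¹.mulVec
            (fun i => y i - (0 : EuclideanSpace ℝ (Fin d)) i))) ≤ 1 := by
        rw [Real.exp_le_one_iff]
        have := hq1nonneg y
        nlinarith
      calc c1 * Real.exp _ ≤ c1 * 1 := by exact mul_le_mul_of_nonneg_left hexp hc1pos.le
        _ = c1 := mul_one c1
    have h2le : ∀ y, F2 y ≤ c2 := by
      intro y; rw [hF2]
      have hexp : Real.exp (-(1 / 2) * ((fun i => y i - (0 : EuclideanSpace ℝ (Fin d)) i) ⬝ᵥ
          S2⁻¹.mulVec (fun i => y i - (0 : EuclideanSpace ℝ (Fin d)) i))) ≤ 1 := by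
        rw [Real.exp_le_one_iff]
        have := hq2nonneg y
        nlinarith
      calc c2 * Real.exp _ ≤ c2 * 1 := by exact mul_le_mul_of_nonneg_left hexp hc2pos.le
        _ = c2 := mul_one c2
    have hFne : ¬ ∀ y : EuclideanSpace ℝ (Fin d), F1 y = F2 y := by
      intro hall
      have hz0 : (fun i => (0 : EuclideanSpace ℝ (Fin d)) i -
          (0 : EuclideanSpace ℝ (Fin d)) i) = (0 : Fin d → ℝ) := by
        funext i
        show (0 : EuclideanSpace ℝ (Fin d)) i - (0 : EuclideanSpace ℝ (Fin d)) i = 0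
        exact sub_self _
      have hc12 : c1 = c2 := by
        have h := hall 0
        rw [hF1, hF2] at h
        simp only [hz0, zero_dotProduct, mul_zero, Real.exp_zero, mul_one] at h
        exact h
      have hquadeq : ∀ v : Fin d → ℝ, v ⬝ᵥ (S2⁻¹ - 1).mulVec v = 0 := by
        intro v
        have h := hall (WithLp.toLp 2 v)
        rw [hF1, hF2] at h
        simp only at h
        rw [h0 (WithLp.toLp 2 v), ← hc12] at h
        have hexp := mul_left_cancel₀ hc1pos.ne' h
        have hqq := mul_left_cancel₀ (by norm_num : (-(1/2) : ℝ) ≠ 0) (Real.exp_eq_exp.mp hexp)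
        rw [inv_one, Matrix.one_mulVec] at hqq
        rw [Matrix.sub_mulVec, dotProduct_sub, Matrix.one_mulVec, sub_eq_zero]
        exact hqq.symm
      have hDsym : (S2⁻¹ - 1)ᵀ = S2⁻¹ - 1 := by
        rw [Matrix.transpose_sub, Matrix.transpose_one, Matrix.transpose_nonsing_inv, hS2sym]
      have hD0 := sym_eq_zero_of_quad (S2⁻¹ - 1) hDsym hquadeq
      have hS2inv1 : S2⁻¹ = 1 := sub_eq_zero.mp hD0
      apply hS2ne1
      calc S2 = S2⁻¹⁻¹ := (Matrix.nonsing_inv_nonsing_inv S2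
            (isUnit_iff_ne_zero.mpr hS2det)).symm
        _ = (1 : Matrix (Fin d) (Fin d) ℝ)⁻¹ := by rw [hS2inv1]
        _ = 1 := inv_one
    push_neg at hFne
    obtain ⟨y₀, hy₀⟩ := hFne
    rcases lt_or_gt_of_ne hy₀ with hlt | hgt
    · have hne := withDensity_ne_of_lt F1 F2 c1 hcont1 hcont2 h1nonneg h1le y₀ hlt
      rw [hPdef, hQdef2]
      exact hne
    · have hne := withDensity_ne_of_lt F2 F1 c2 hcont2 hcont1 h2nonneg h2le y₀ hgt
      rw [hPdef, hQdef2]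
      exact hne.symm
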